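/- An ℝ-tree with at least two points has small inductive dimension 1; more specifically, every point of an ℝ-tree has arbitrarily small open balls whose boundaries are totally disconnected (hence zero-dimensional), so ind ≤ 1, and since it contains an arc, ind = 1. -/

import Mathlib

universe u

/-- `IndLe n X` means the small inductive dimension of `X` is at most `n - 1`:
`IndLe 0 X` iff `X` is empty, and `IndLe (n+1) X` iff every point of `X` has
arbitrarily small open neighborhoods whose frontiers have dimension at most `n - 1`. -/
def IndLe : ℕ → (X : Type u) → [inst : TopologicalSpace X] → Prop
  | 0, X, _ => IsEmpty X
  | n + 1, X, _i => by
    exact ∀ (x : X) (U : Set X), IsOpen U → x ∈ U →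
      ∃ V : Set X, IsOpen V ∧ x ∈ V ∧ V ⊆ U ∧ IndLe n ↥(frontier V)

open Set

section Geo

variable {T : Type u} [MetricSpace T]

/-- `γ` is a (unit-speed) geodesic from `a` to `b`, parametrized on `[0, dist a b]`. -/
def IsGeo (a b : T) (γ : ℝ → T) : Prop :=
  γ 0 = a ∧ γ (dist a b) = b ∧ ∀ u ∈ Set.Icc (0 : ℝ) (dist a b), ∀ v ∈ Set.Icc (0 : ℝ) (dist a b),
    dist (γ u) (γ v) = |u - v|

lemma IsGeo.dist_from {a b : T} {γ : ℝ → T} (h : IsGeo a b γ) {t : ℝ}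
    (ht : t ∈ Set.Icc (0 : ℝ) (dist a b)) : dist a (γ t) = t := by
  have h0 : (0 : ℝ) ∈ Set.Icc (0 : ℝ) (dist a b) := ⟨le_refl _, dist_nonneg⟩
  have := h.2.2 0 h0 t ht
  rw [h.1] at this
  rw [this, abs_of_nonpos (by linarith [ht.1]), neg_sub, sub_zero]

lemma IsGeo.restrict {a b : T} {γ : ℝ → T} (h : IsGeo a b γ) {t : ℝ}
    (ht : t ∈ Set.Icc (0 : ℝ) (dist a b)) : IsGeo a (γ t) γ := by
  have hd : dist a (γ t) = t := h.dist_from ht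
  refine ⟨h.1, by rw [hd], ?_⟩
  intro u hu v hv
  rw [hd] at hu hv
  exact h.2.2 u ⟨hu.1, hu.2.trans ht.2⟩ v ⟨hv.1, hv.2.trans ht.2⟩

lemma mul_mem_Icc {d : ℝ} (hd : 0 ≤ d) (u : unitInterval) :
    (u : ℝ) * d ∈ Set.Icc (0 : ℝ) d :=
  ⟨mul_nonneg u.2.1 hd, by nlinarith [u.2.2, u.2.1]⟩

/-- A geodesic, reparametrized as a `Path`. -/
def geoPath {a b : T} {γ : ℝ → T} (h : IsGeo a b γ) : Path a b where
  toFun := fun u => γ ((u : ℝ) * dist a b)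
  continuous_toFun := by
    apply LipschitzWith.continuous (K := ⟨dist a b, dist_nonneg⟩)
    apply LipschitzWith.of_dist_le_mul
    intro u v
    rw [h.2.2 _ (mul_mem_Icc dist_nonneg u) _ (mul_mem_Icc dist_nonneg v)]
    rw [Subtype.dist_eq, Real.dist_eq]
    rw [show (u : ℝ) * dist a b - (v : ℝ) * dist a b = ((u : ℝ) - v) * dist a b by ring]
    rw [abs_mul, abs_of_nonneg (dist_nonneg : (0:ℝ) ≤ dist a b)]
    exact le_of_eq (mul_comm _ _)
  source' := by simp [h.1]
  target' := by simp [h.2.1]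

lemma geoPath_apply {a b : T} {γ : ℝ → T} (h : IsGeo a b γ) (u : unitInterval) :
    (geoPath h) u = γ ((u : ℝ) * dist a b) := rfl

lemma geoPath_inj {a b : T} {γ : ℝ → T} (h : IsGeo a b γ) (hab : a ≠ b) :
    Function.Injective ⇑(geoPath h) := by
  intro u v huv
  have hd : (0 : ℝ) < dist a b := dist_pos.2 hab
  rw [geoPath_apply, geoPath_apply] at huv
  have := h.2.2 _ (mul_mem_Icc dist_nonneg u) _ (mul_mem_Icc dist_nonneg v)
  rw [huv, dist_self] at this
  have : (u : ℝ) * dist a b = (v : ℝ) * dist a b := by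
    have := this.symm
    rwa [abs_eq_zero, sub_eq_zero] at this
  ext
  exact mul_right_cancel₀ (ne_of_gt hd) this

/-- Two geodesics with the same endpoints agree (given uniqueness of arcs). -/
lemma geo_unique
    (huniq : ∀ a b : T, ∀ γ₁ γ₂ : Path a b,
      Function.Injective ⇑γ₁ → Function.Injective ⇑γ₂ →
        Set.range ⇑γ₁ = Set.range ⇑γ₂)
    {a b : T} {γ₁ γ₂ : ℝ → T} (h1 : IsGeo a b γ₁) (h2 : IsGeo a b γ₂)
    {t : ℝ} (ht : t ∈ Set.Icc (0 : ℝ) (dist a b)) : γ₁ t = γ₂ t := by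
  rcases eq_or_ne a b with hab | hab
  · have hd : dist a b = 0 := by rw [hab, dist_self]
    rw [hd] at ht
    have ht0 : t = 0 := le_antisymm ht.2 ht.1
    rw [ht0, h1.1, h2.1]
  · have hd : (0 : ℝ) < dist a b := dist_pos.2 hab
    have hr := huniq a b (geoPath h1) (geoPath h2) (geoPath_inj h1 hab) (geoPath_inj h2 hab)
    have hm : γ₁ t ∈ Set.range ⇑(geoPath h1) := by
      refine ⟨⟨t / dist a b, div_nonneg ht.1 hd.le, (div_le_one hd).2 ht.2⟩, ?_⟩
      rw [geoPath_apply]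
      congr 1
      exact div_mul_cancel₀ t hd.ne'
    rw [hr] at hm
    obtain ⟨u, hu⟩ := hm
    rw [geoPath_apply] at hu
    have e1 : dist a (γ₂ ((u : ℝ) * dist a b)) = (u : ℝ) * dist a b :=
      h2.dist_from (mul_mem_Icc dist_nonneg u)
    have e2 : dist a (γ₁ t) = t := h1.dist_from ht
    rw [hu, e2] at e1
    rw [← hu, e1]

/-- The Gromov product / median lemma: two geodesics from `x` agree up to a time `s`,
after which they diverge, and the distance between the endpoints is the sum of the
remaining lengths. -/
lemma gromov
    (hgeo : ∀ a b : T, ∃ γ : ℝ → T, γ 0 = a ∧ γ (dist a b) = b ∧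
      ∀ u ∈ Set.Icc (0 : ℝ) (dist a b), ∀ v ∈ Set.Icc (0 : ℝ) (dist a b),
        dist (γ u) (γ v) = |u - v|)
    (huniq : ∀ a b : T, ∀ γ₁ γ₂ : Path a b,
      Function.Injective ⇑γ₁ → Function.Injective ⇑γ₂ →
        Set.range ⇑γ₁ = Set.range ⇑γ₂)
    (x y z : T) {γy γz : ℝ → T} (hy : IsGeo x y γy) (hz : IsGeo x z γz) :
    ∃ s : ℝ, s ∈ Set.Icc (0 : ℝ) (min (dist x y) (dist x z)) ∧
      (∀ t ∈ Set.Icc (0 : ℝ) s, γy t = γz t) ∧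
      (∀ t ∈ Set.Icc (0 : ℝ) (min (dist x y) (dist x z)), γy t = γz t → t ≤ s) ∧
      dist y z = (dist x y - s) + (dist x z - s) := by
  set d1 := dist x y with hd1
  set d2 := dist x z with hd2
  set A : Set ℝ := {t | t ∈ Set.Icc (0 : ℝ) (min d1 d2) ∧ γy t = γz t} with hA
  have hA0 : (0 : ℝ) ∈ A := ⟨⟨le_refl _, le_min dist_nonneg dist_nonneg⟩, by rw [hy.1, hz.1]⟩
  have hne : A.Nonempty := ⟨0, hA0⟩
  have hbdd : BddAbove A := ⟨min d1 d2, fun t ht => ht.1.2⟩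
  set s := sSup A with hs
  have hs0 : 0 ≤ s := le_csSup hbdd hA0
  have hsmin : s ≤ min d1 d2 := csSup_le hne fun t ht => ht.1.2
  have hdown : ∀ t ∈ A, ∀ t' ∈ Set.Icc (0 : ℝ) t, t' ∈ A := by
    intro t ht t' ht'
    have hty : t ∈ Set.Icc (0 : ℝ) d1 := ⟨ht.1.1, ht.1.2.trans (min_le_left _ _)⟩
    have htz : t ∈ Set.Icc (0 : ℝ) d2 := ⟨ht.1.1, ht.1.2.trans (min_le_right _ _)⟩
    have g1 : IsGeo x (γy t) γy := hy.restrict hty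
    have g2 : IsGeo x (γy t) γz := by rw [ht.2]; exact hz.restrict htz
    have hdxt : dist x (γy t) = t := hy.dist_from hty
    refine ⟨⟨ht'.1, ht'.2.trans ht.1.2⟩, ?_⟩
    exact geo_unique huniq g1 g2 (by rw [hdxt]; exact ht')
  have hsA : s ∈ A := by
    refine ⟨⟨hs0, hsmin⟩, ?_⟩
    have key : ∀ ε : ℝ, 0 < ε → dist (γy s) (γz s) ≤ 2 * ε := by
      intro ε hε
      obtain ⟨t, htA, hts⟩ := exists_lt_of_lt_csSup hne (show s - ε < sSup A by rw [← hs]; linarith)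
      have hts' : t ≤ s := le_csSup hbdd htA
      have hsy : s ∈ Set.Icc (0 : ℝ) d1 := ⟨hs0, hsmin.trans (min_le_left _ _)⟩
      have hsz : s ∈ Set.Icc (0 : ℝ) d2 := ⟨hs0, hsmin.trans (min_le_right _ _)⟩
      have hty : t ∈ Set.Icc (0 : ℝ) d1 := ⟨htA.1.1, htA.1.2.trans (min_le_left _ _)⟩
      have htz : t ∈ Set.Icc (0 : ℝ) d2 := ⟨htA.1.1, htA.1.2.trans (min_le_right _ _)⟩
      have e1 : dist (γy s) (γy t) = |s - t| := hy.2.2 s hsy t hty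
      have e2 : dist (γz t) (γz s) = |t - s| := hz.2.2 t htz s hsz
      calc dist (γy s) (γz s) ≤ dist (γy s) (γy t) + dist (γz t) (γz s) := by
            rw [htA.2]; exact dist_triangle _ _ _
        _ = |s - t| + |t - s| := by rw [e1, e2]
        _ ≤ 2 * ε := by rw [abs_of_nonneg (by linarith), abs_of_nonpos (by linarith)]; linarith
    have : dist (γy s) (γz s) ≤ 0 := by
      by_contra hpos
      push_neg at hpos
      have := key (dist (γy s) (γz s) / 4) (by linarith)
      linarith
    exact dist_le_zero.1 this
  have hmax : ∀ t ∈ Set.Icc (0 : ℝ) (min d1 d2), γy t = γz t → t ≤ s :=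
    fun t ht heq => le_csSup hbdd ⟨ht, heq⟩
  have hdowns : ∀ t ∈ Set.Icc (0 : ℝ) s, γy t = γz t := fun t ht => (hdown s hsA t ht).2
  refine ⟨s, ⟨hs0, hsmin⟩, hdowns, hmax, ?_⟩

  -- now the main distance computation
  rcases eq_or_ne y z with hyz | hyz
  · -- y = z : show s = d1 (note d2 = d1)
    subst hyz
    have hdd : d2 = d1 := by rw [hd1, hd2]
    have hsd1 : s = d1 := by
      refine le_antisymm (hsmin.trans (min_le_left _ _)) ?_
      refine hmax d1 ⟨dist_nonneg, le_min (le_refl _) (by rw [hdd])⟩ ?_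
      have e1 : γy d1 = y := hy.2.1
      have e2 : γz d1 = y := by have := hz.2.1; rwa [← hd2, hdd] at this
      rw [e1, e2]
    rw [dist_self, hsd1, hdd]
    ring
  · rcases eq_or_lt_of_le (hsmin.trans (min_le_left _ _) : s ≤ d1) with h1e | h1l
    · -- s = d1 : y lies on the geodesic to z
      have hyzs : y = γz s := by rw [← hsA.2, h1e]; exact hy.2.1.symm
      have hsz : s ∈ Set.Icc (0 : ℝ) d2 := ⟨hs0, hsmin.trans (min_le_right _ _)⟩
      have : dist y z = d2 - s := by
        rw [hyzs]
        have := hz.2.2 s hsz d2 ⟨dist_nonneg, le_refl _⟩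
        rw [hz.2.1] at this
        rw [this, abs_of_nonpos (by linarith [hsz.2]), neg_sub]
      rw [this, ← h1e]; ring
    rcases eq_or_lt_of_le (hsmin.trans (min_le_right _ _) : s ≤ d2) with h2e | h2l
    · -- s = d2 : z lies on the geodesic to y
      have hzys : z = γy s := by rw [hsA.2, h2e]; exact hz.2.1.symm
      have hsy : s ∈ Set.Icc (0 : ℝ) d1 := ⟨hs0, hsmin.trans (min_le_left _ _)⟩
      have : dist y z = d1 - s := by
        rw [dist_comm, hzys]
        have := hy.2.2 s hsy d1 ⟨dist_nonneg, le_refl _⟩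
        rw [hy.2.1] at this
        rw [this, abs_of_nonpos (by linarith [hsy.2]), neg_sub]
      rw [this, ← h2e]; ring
    · -- main case: s < d1 and s < d2
      set L1 := d1 - s with hL1
      set L2 := d2 - s with hL2
      set L := L1 + L2 with hL
      have hL1pos : 0 < L1 := by simp [hL1]; linarith
      have hL2pos : 0 < L2 := by simp [hL2]; linarith
      have hLpos : 0 < L := by positivity
      set δ : ℝ → T := fun t => if t ≤ L1 then γy (d1 - t) else γz (s + (t - L1)) with hδ
      have memy : ∀ t : ℝ, 0 ≤ t → t ≤ L1 → d1 - t ∈ Set.Icc (0 : ℝ) d1 := by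
        intro t h0 h1
        rw [hL1] at h1
        exact ⟨by linarith, by linarith⟩
      have memz : ∀ t : ℝ, L1 ≤ t → t ≤ L → s + (t - L1) ∈ Set.Icc (0 : ℝ) d2 := by
        intro t h0 h1
        constructor
        · linarith
        · rw [hL] at h1
          rw [hL2] at *
          linarith
      have hδ0 : δ 0 = y := by
        rw [hδ]; simp only [if_pos hL1pos.le, sub_zero]; exact hy.2.1
      have hδL : δ L = z := by
        rw [hδ]; simp only
        rw [if_neg (not_le.2 (by linarith : L1 < L))]
        have : s + (L - L1) = d2 := by rw [hL, hL2]; ring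
        rw [this]; exact hz.2.1
      have hδL1 : δ L1 = γy s := by
        rw [hδ]; simp only [if_pos (le_refl L1)]
        congr 1; rw [hL1]; ring
      -- Lipschitz property on [0, L]
      have lip : ∀ t1 t2 : ℝ, 0 ≤ t1 → t1 ≤ t2 → t2 ≤ L → dist (δ t1) (δ t2) ≤ t2 - t1 := by
        intro t1 t2 h01 h12 h2L
        rcases le_or_gt t2 L1 with hc2 | hc2
        · -- both in the first segment
          have hc1 : t1 ≤ L1 := h12.trans hc2
          rw [hδ]; simp only [if_pos hc1, if_pos hc2]
          rw [hy.2.2 _ (memy t1 h01 hc1) _ (memy t2 (by linarith) hc2)]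
          rw [show d1 - t1 - (d1 - t2) = t2 - t1 by ring, abs_of_nonneg (by linarith)]
        · rcases le_or_gt t1 L1 with hc1 | hc1
          · -- mixed
            have e1 : dist (δ t1) (γy s) ≤ L1 - t1 := by
              rw [hδ]; simp only [if_pos hc1]
              rw [hy.2.2 _ (memy t1 h01 hc1) s ⟨hs0, h1l.le⟩]
              rw [show d1 - t1 - s = L1 - t1 by rw [hL1]; ring]
              rw [abs_of_nonneg (by linarith)]
            have e2 : dist (γy s) (δ t2) ≤ t2 - L1 := by
              rw [hsA.2, hδ]; simp only [if_neg (not_le.2 hc2)]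
              have hsz' : s ∈ Set.Icc (0 : ℝ) d2 := ⟨hs0, by linarith⟩
              rw [hz.2.2 _ hsz' _ (memz t2 hc2.le h2L)]
              rw [show s - (s + (t2 - L1)) = -(t2 - L1) by ring, abs_neg,
                abs_of_nonneg (by linarith)]
            calc dist (δ t1) (δ t2) ≤ dist (δ t1) (γy s) + dist (γy s) (δ t2) :=
                  dist_triangle _ _ _
              _ ≤ t2 - t1 := by linarith
          · -- both in the second segment
            rw [hδ]; simp only [if_neg (not_le.2 hc1), if_neg (not_le.2 hc2)]
            rw [hz.2.2 _ (memz t1 hc1.le (by linarith)) _ (memz t2 (by linarith) h2L)]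
            rw [show s + (t1 - L1) - (s + (t2 - L1)) = -(t2 - t1) by ring, abs_neg,
              abs_of_nonneg (by linarith)]
      -- Injectivity on [0, L]
      have injd : ∀ t1 t2 : ℝ, 0 ≤ t1 → t1 ≤ t2 → t2 ≤ L → δ t1 = δ t2 → t1 = t2 := by
        intro t1 t2 h01 h12 h2L heq
        rcases le_or_gt t2 L1 with hc2 | hc2
        · have hc1 : t1 ≤ L1 := h12.trans hc2
          rw [hδ] at heq; simp only [if_pos hc1, if_pos hc2] at heq
          have := hy.2.2 _ (memy t1 h01 hc1) _ (memy t2 (by linarith) hc2)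
          rw [heq, dist_self] at this
          have := (abs_eq_zero.1 this.symm)
          linarith [sub_eq_zero.1 this]
        · rcases le_or_gt t1 L1 with hc1 | hc1
          · -- mixed case: impossible unless degenerate
            exfalso
            rw [hδ] at heq; simp only [if_pos hc1, if_neg (not_le.2 hc2)] at heq
            set v := s + (t2 - L1) with hv
            have hvd2 : v ∈ Set.Icc (0 : ℝ) d2 := memz t2 hc2.le h2L
            have hvgt : s < v := by rw [hv]; linarith
            have e1 : dist x (γy (d1 - t1)) = d1 - t1 := hy.dist_from (memy t1 h01 hc1)
            have e2 : dist x (γz v) = v := hz.dist_from hvd2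
            have huv : d1 - t1 = v := by rw [← e1, ← e2, heq]
            have hvA : v ∈ A := by
              refine ⟨⟨by linarith [hvd2.1], le_min (by rw [← huv]; linarith) hvd2.2⟩, ?_⟩
              rw [← huv] at heq ⊢
              exact heq
            have : v ≤ s := le_csSup hbdd hvA
            linarith
          · rw [hδ] at heq; simp only [if_neg (not_le.2 hc1), if_neg (not_le.2 hc2)] at heq
            have := hz.2.2 _ (memz t1 hc1.le (by linarith)) _ (memz t2 (by linarith) h2L)
            rw [heq, dist_self] at this
            have := (abs_eq_zero.1 this.symm)
            have := sub_eq_zero.1 this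
            linarith
      -- build the path
      set p : Path y z :=
        { toFun := fun u => δ ((u : ℝ) * L)
          continuous_toFun := by
            apply LipschitzWith.continuous (K := ⟨L, hLpos.le⟩)
            apply LipschitzWith.of_dist_le_mul
            intro u v
            have hm : ∀ w : unitInterval, (w : ℝ) * L ∈ Set.Icc (0 : ℝ) L := by
              intro w; exact ⟨mul_nonneg w.2.1 hLpos.le, by nlinarith [w.2.2, w.2.1]⟩
            rcases le_total ((u : ℝ) * L) ((v : ℝ) * L) with huv | huv
            · calc dist (δ ((u:ℝ)*L)) (δ ((v:ℝ)*L)) ≤ (v:ℝ)*L - (u:ℝ)*L :=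
                    lip _ _ (hm u).1 huv (hm v).2
                _ ≤ ↑(⟨L, hLpos.le⟩ : NNReal) * dist u v := by
                    rw [Subtype.dist_eq, Real.dist_eq]
                    have : (v:ℝ)*L - (u:ℝ)*L = ((v:ℝ) - u) * L := by ring
                    rw [this]
                    calc ((v:ℝ) - u) * L ≤ |(u:ℝ) - v| * L := by
                          rw [abs_sub_comm]; nlinarith [le_abs_self ((v:ℝ) - u)]
                      _ = L * |(u:ℝ) - v| := by ring
            · rw [dist_comm]
              calc dist (δ ((v:ℝ)*L)) (δ ((u:ℝ)*L)) ≤ (u:ℝ)*L - (v:ℝ)*L :=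
                    lip _ _ (hm v).1 huv (hm u).2
                _ ≤ ↑(⟨L, hLpos.le⟩ : NNReal) * dist u v := by
                    rw [Subtype.dist_eq, Real.dist_eq]
                    have : (u:ℝ)*L - (v:ℝ)*L = ((u:ℝ) - v) * L := by ring
                    rw [this]
                    calc ((u:ℝ) - v) * L ≤ |(u:ℝ) - v| * L := by
                          nlinarith [le_abs_self ((u:ℝ) - v)]
                      _ = L * |(u:ℝ) - v| := by ring
          source' := by simp only [Set.Icc.coe_zero, zero_mul]; exact hδ0
          target' := by simp only [Set.Icc.coe_one, one_mul]; exact hδL } with hp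
      have hpinj : Function.Injective ⇑p := by
        intro u v huv
        have hm : ∀ w : unitInterval, (w : ℝ) * L ∈ Set.Icc (0 : ℝ) L := by
          intro w; exact ⟨mul_nonneg w.2.1 hLpos.le, by nlinarith [w.2.2, w.2.1]⟩
        have huv' : δ ((u : ℝ) * L) = δ ((v : ℝ) * L) := huv
        have : (u : ℝ) * L = (v : ℝ) * L := by
          rcases le_total ((u : ℝ) * L) ((v : ℝ) * L) with h | h
          · exact injd _ _ (hm u).1 h (hm v).2 huv'
          · exact (injd _ _ (hm v).1 h (hm u).2 huv'.symm).symm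
        ext
        exact mul_right_cancel₀ hLpos.ne' this
      -- geodesic from y to z
      obtain ⟨g, hg0, hgd, hgiso⟩ := hgeo y z
      have hg : IsGeo y z g := ⟨hg0, hgd, hgiso⟩
      have hr := huniq y z (geoPath hg) p (geoPath_inj hg hyz) hpinj
      -- the midpoint m lies on the range of p, hence on the geodesic
      have hmem : γy s ∈ Set.range ⇑p := by
        refine ⟨⟨L1 / L, div_nonneg hL1pos.le hLpos.le,
          (div_le_one hLpos).2 (by simp [hL]; linarith)⟩, ?_⟩
        show δ (L1 / L * L) = γy s
        rw [div_mul_cancel₀ _ hLpos.ne']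
        exact hδL1
      rw [← hr] at hmem
      obtain ⟨u, hu⟩ := hmem
      rw [geoPath_apply] at hu
      have hud : (u : ℝ) * dist y z ∈ Set.Icc (0 : ℝ) (dist y z) := mul_mem_Icc dist_nonneg u
      have e1 : dist y (γy s) = (u : ℝ) * dist y z := by rw [← hu]; exact hg.dist_from hud
      have e2 : dist (γy s) z = dist y z - (u : ℝ) * dist y z := by
        rw [← hu]
        have := hg.2.2 _ hud (dist y z) ⟨dist_nonneg, le_refl _⟩
        rw [hg.2.1] at this
        rw [this, abs_of_nonpos (by linarith [hud.2]), neg_sub]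
      have e3 : dist y (γy s) = L1 := by
        have := hy.2.2 d1 ⟨dist_nonneg, le_refl _⟩ s ⟨hs0, h1l.le⟩
        rw [hy.2.1] at this
        rw [this, abs_of_nonneg (by simp [hL1] at hL1pos ⊢; linarith), hL1]
      have e4 : dist (γy s) z = L2 := by
        rw [hsA.2]
        have := hz.2.2 s ⟨hs0, h2l.le⟩ d2 ⟨dist_nonneg, le_refl _⟩
        rw [hz.2.1] at this
        rw [this, abs_of_nonpos (by linarith), neg_sub, hL2]
      have : dist y z = L1 + L2 := by
        rw [← e3, ← e4, e1, e2]; ring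
      rw [this, hL1, hL2]

/-- Spheres in an ℝ-tree are ultrametric spaces. -/
lemma sphere_ultra
    (hgeo : ∀ a b : T, ∃ γ : ℝ → T, γ 0 = a ∧ γ (dist a b) = b ∧
      ∀ u ∈ Set.Icc (0 : ℝ) (dist a b), ∀ v ∈ Set.Icc (0 : ℝ) (dist a b),
        dist (γ u) (γ v) = |u - v|)
    (huniq : ∀ a b : T, ∀ γ₁ γ₂ : Path a b,
      Function.Injective ⇑γ₁ → Function.Injective ⇑γ₂ →
        Set.range ⇑γ₁ = Set.range ⇑γ₂)
    (x : T) (r : ℝ) (p q t : T) (hp : dist x p = r) (hq : dist x q = r) (ht : dist x t = r) :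
    dist p t ≤ max (dist p q) (dist q t) := by
  classical
  set γ : T → (ℝ → T) := fun w => Classical.choose (hgeo x w) with hγ
  have hγspec : ∀ w : T, IsGeo x w (γ w) := fun w => Classical.choose_spec (hgeo x w)
  obtain ⟨s1, hs1mem, hs1down, hs1max, hs1d⟩ :=
    gromov hgeo huniq x p q (hγspec p) (hγspec q)
  obtain ⟨s2, hs2mem, hs2down, hs2max, hs2d⟩ :=
    gromov hgeo huniq x q t (hγspec q) (hγspec t)
  obtain ⟨s3, hs3mem, hs3down, hs3max, hs3d⟩ :=
    gromov hgeo huniq x p t (hγspec p) (hγspec t)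
  rw [hp, hq] at hs1mem hs1max hs1d
  rw [hq, ht] at hs2mem hs2max hs2d
  rw [hp, ht] at hs3mem hs3max hs3d
  rw [min_self] at hs1mem hs1max hs2mem hs2max hs3mem hs3max
  set c := min s1 s2 with hc
  have hc0 : 0 ≤ c := le_min hs1mem.1 hs2mem.1
  have hcr : c ≤ r := (min_le_left _ _).trans hs1mem.2
  have e1 : γ p c = γ q c := hs1down c ⟨hc0, min_le_left _ _⟩
  have e2 : γ q c = γ t c := hs2down c ⟨hc0, min_le_right _ _⟩
  have hcs3 : c ≤ s3 := hs3max c ⟨hc0, hcr⟩ (e1.trans e2)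
  have hd3 : dist p t = 2 * r - 2 * s3 := by rw [hs3d]; ring
  rcases le_total s1 s2 with h12 | h12
  · have : c = s1 := min_eq_left h12
    have : dist p t ≤ dist p q := by rw [hd3, hs1d]; rw [this] at hcs3; linarith
    exact this.trans (le_max_left _ _)
  · have : c = s2 := min_eq_right h12
    have : dist p t ≤ dist q t := by rw [hd3, hs2d]; rw [this] at hcs3; linarith
    exact this.trans (le_max_right _ _)

end Geo

/-- An ℝ-tree (a geodesic metric space in which any two points are joined by a
unique arc) with at least two points has small inductive dimension exactly 1. -/
theorem stmt16 {T : Type u} [MetricSpace T] [Nontrivial T]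
    (hgeo : ∀ a b : T, ∃ γ : ℝ → T, γ 0 = a ∧ γ (dist a b) = b ∧
      ∀ u ∈ Set.Icc (0 : ℝ) (dist a b), ∀ v ∈ Set.Icc (0 : ℝ) (dist a b),
        dist (γ u) (γ v) = |u - v|)
    (huniq : ∀ a b : T, ∀ γ₁ γ₂ : Path a b,
      Function.Injective ⇑γ₁ → Function.Injective ⇑γ₂ →
        Set.range ⇑γ₁ = Set.range ⇑γ₂) :
    IndLe 2 T ∧ ¬ IndLe 1 T := by
  constructor
  · -- IndLe 2
    show ∀ (x : T) (U : Set T), IsOpen U → x ∈ U →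
      ∃ V : Set T, IsOpen V ∧ x ∈ V ∧ V ⊆ U ∧ IndLe 1 ↥(frontier V)
    intro x U hU hxU
    obtain ⟨r, hr, hball⟩ := Metric.isOpen_iff.1 hU x hxU
    refine ⟨Metric.ball x r, Metric.isOpen_ball, Metric.mem_ball_self hr, hball, ?_⟩
    set F : Set T := frontier (Metric.ball x r) with hF
    have hFs : ∀ p : T, p ∈ F → dist x p = r := by
      intro p hp
      have := Metric.frontier_ball_subset_sphere hp
      rw [Metric.mem_sphere] at this
      rwa [dist_comm]
    show ∀ (y : F) (U' : Set F), IsOpen U' → y ∈ U' →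
      ∃ V' : Set F, IsOpen V' ∧ y ∈ V' ∧ V' ⊆ U' ∧ IsEmpty ↥(frontier V')
    intro y U' hU' hyU'
    obtain ⟨ε, hε, hball'⟩ := Metric.isOpen_iff.1 hU' y hyU'
    refine ⟨Metric.ball y ε, Metric.isOpen_ball, Metric.mem_ball_self hε, hball', ?_⟩
    rw [Set.isEmpty_coe_sort]
    refine IsClopen.frontier_eq ⟨?_, Metric.isOpen_ball⟩
    rw [← isOpen_compl_iff]
    rw [Metric.isOpen_iff]
    intro z hz
    rw [Set.mem_compl_iff, Metric.mem_ball, not_lt] at hz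
    refine ⟨ε, hε, ?_⟩
    intro w hw
    rw [Metric.mem_ball] at hw
    rw [Set.mem_compl_iff, Metric.mem_ball, not_lt]
    by_contra hcon
    push_neg at hcon
    -- dist z y ≤ max (dist z w) (dist w y) < ε, contradiction with hz : ε ≤ dist z y
    have hzw : dist (z : T) (w : T) < ε := by
      rw [dist_comm]; rwa [Subtype.dist_eq] at hw
    have hwy : dist (w : T) (y : T) < ε := by rwa [Subtype.dist_eq] at hcon
    have hzy : ε ≤ dist (z : T) (y : T) := by rwa [Subtype.dist_eq] at hz
    have := sphere_ultra hgeo huniq x r (z : T) (w : T) (y : T)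
      (hFs _ z.2) (hFs _ w.2) (hFs _ y.2)
    rcases max_cases (dist (z : T) (w : T)) (dist (w : T) (y : T)) with ⟨hm, _⟩ | ⟨hm, _⟩ <;>
      rw [hm] at this <;> linarith
  · -- ¬ IndLe 1
    intro h
    obtain ⟨a, b, hab⟩ := exists_pair_ne T
    have hd : (0 : ℝ) < dist a b := dist_pos.2 hab
    have h1 : ∀ (x : T) (U : Set T), IsOpen U → x ∈ U →
        ∃ V : Set T, IsOpen V ∧ x ∈ V ∧ V ⊆ U ∧ IsEmpty ↥(frontier V) := h
    obtain ⟨V, hVopen, haV, hVsub, hVfr⟩ :=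
      h1 a (Metric.ball a (dist a b)) Metric.isOpen_ball (Metric.mem_ball_self hd)
    rw [Set.isEmpty_coe_sort] at hVfr
    have hclopen : IsClopen V := isClopen_iff_frontier_eq_empty.2 hVfr
    have : PathConnectedSpace T := by
      refine ⟨⟨a⟩, fun u v => ?_⟩
      obtain ⟨g, hg0, hgd, hgiso⟩ := hgeo u v
      exact ⟨geoPath (⟨hg0, hgd, hgiso⟩ : IsGeo u v g)⟩
    have : PreconnectedSpace T := inferInstance
    rcases isClopen_iff.1 hclopen with hV | hV
    · rw [hV] at haV; exact haV
    · rw [hV] at hVsub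
      have : b ∈ Metric.ball a (dist a b) := hVsub (Set.mem_univ b)
      rw [Metric.mem_ball, dist_comm] at this
      exact lt_irrefl _ this
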